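/- Let (T, φ) be a quasi-Sturmian coloring. Then (T, φ) is of unbounded type if and only if it is uniformly recurrent, i.e., for every n there exists m such that every colored n-ball of φ occurs within the m-ball around every vertex of T. -/

import Mathlib

open SimpleGraph

variable {V A : Type*}

/-- Equivalence of colored `n`-balls: a color-preserving isometry between the balls
of radius `n` centered at `u` and `v`, sending `u` to `v`. -/
def BallEquiv (G : SimpleGraph V) (φ : V → A) (n : ℕ) (u v : V) : Prop :=
  ∃ f : V → V, f u = v ∧
    (∀ x y : V, G.dist u x ≤ n → G.dist u y ≤ n → G.dist (f x) (f y) = G.dist x y) ∧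
    (∀ x : V, G.dist u x ≤ n → φ (f x) = φ x) ∧
    (∀ z : V, G.dist v z ≤ n → ∃ x : V, G.dist u x ≤ n ∧ f x = z)

/-- The factor complexity `b(n)`: the number of classes of colored `n`-balls. -/
noncomputable def complexity (G : SimpleGraph V) (φ : V → A) (n : ℕ) : ℕ :=
  Nat.card (Quot (BallEquiv G φ n))

/-- The colored `n`-ball at `u` is special: it admits two inequivalent `(n+1)`-extensions. -/
def IsSpecialCenter (G : SimpleGraph V) (φ : V → A) (n : ℕ) (u : V) : Prop :=
  ∃ v, BallEquiv G φ n u v ∧ ¬ BallEquiv G φ (n+1) u v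

/-- The type set `Λ_u` of a vertex. -/
def typeSet (G : SimpleGraph V) (φ : V → A) (u : V) : Set ℕ :=
  {n | IsSpecialCenter G φ n u}

/-- Two vertices are in the same class: their colored `n`-balls agree for all `n`. -/
def SameClass (G : SimpleGraph V) (φ : V → A) (u v : V) : Prop :=
  ∀ n, BallEquiv G φ n u v

/-- `m` is the maximal type of `u`. -/
def MaxType (G : SimpleGraph V) (φ : V → A) (u : V) (m : ℕ) : Prop :=
  m ∈ typeSet G φ u ∧ ∀ k ∈ typeSet G φ u, k ≤ m

/-- Weak adjacency of classes of colored `n`-balls (given by representatives `x`, `y`). -/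
def WeakAdj (G : SimpleGraph V) (φ : V → A) (n : ℕ) (x y : V) : Prop :=
  ∃ v w, G.Adj v w ∧ BallEquiv G φ n x v ∧ BallEquiv G φ n y w

/-- Strong adjacency: every ball of the class of `x` has a neighboring ball of the class of `y`. -/
def StrongAdj (G : SimpleGraph V) (φ : V → A) (n : ℕ) (x y : V) : Prop :=
  ∀ v, BallEquiv G φ n x v → ∃ w, G.Adj v w ∧ BallEquiv G φ n y w

/-- The factor graph `𝒢ₙ` on classes of colored `n`-balls. -/
def FactorGraph (G : SimpleGraph V) (φ : V → A) (n : ℕ) :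
    SimpleGraph (Quot (BallEquiv G φ n)) where
  Adj a b := a ≠ b ∧ ∃ u v, G.Adj u v ∧ Quot.mk _ u = a ∧ Quot.mk _ v = b
  symm := by constructor; rintro a b ⟨hne, u, v, h, hu, hv⟩; exact ⟨hne.symm, v, u, h.symm, hv, hu⟩
  loopless := by constructor; rintro a ⟨hne, _⟩; exact hne rfl

/-- The quotient graph `X = Γ\T` on classes of vertices. -/
def QuotGraph (G : SimpleGraph V) (φ : V → A) :
    SimpleGraph (Quot (SameClass G φ)) where
  Adj a b := a ≠ b ∧ ∃ u v, G.Adj u v ∧ Quot.mk _ u = a ∧ Quot.mk _ v = b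
  symm := by constructor; rintro a b ⟨hne, u, v, h, hu, hv⟩; exact ⟨hne.symm, v, u, h.symm, hv, hu⟩
  loopless := by constructor; rintro a ⟨hne, _⟩; exact hne rfl

section Lemmas

variable {G : SimpleGraph V} {φ : V → A}

lemma be_refl (G : SimpleGraph V) (φ : V → A) (n : ℕ) (u : V) : BallEquiv G φ n u u :=
  ⟨id, rfl, fun _ _ _ _ => rfl, fun _ _ => rfl, fun z hz => ⟨z, hz, rfl⟩⟩

lemma be_mono {n m : ℕ} (hnm : n ≤ m) {u v : V}
    (h : BallEquiv G φ m u v) : BallEquiv G φ n u v := by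
  obtain ⟨f, hfu, hdist, hcol, hsurj⟩ := h
  refine ⟨f, hfu, fun x y hx hy => hdist x y (hx.trans hnm) (hy.trans hnm),
    fun x hx => hcol x (hx.trans hnm), fun z hz => ?_⟩
  obtain ⟨x, hx, hfx⟩ := hsurj z (hz.trans hnm)
  have h0 : G.dist u u ≤ m := by simp [SimpleGraph.dist_self]
  have heq := hdist u x h0 hx
  rw [hfu, hfx] at heq
  exact ⟨x, heq ▸ hz, hfx⟩

lemma be_symm (hc : G.Connected) {n : ℕ} {u v : V}
    (h : BallEquiv G φ n u v) : BallEquiv G φ n v u := by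
  classical
  obtain ⟨f, hfu, hdist, hcol, hsurj⟩ := h
  have h0 : G.dist u u ≤ n := by simp [SimpleGraph.dist_self]
  have hinj : ∀ x y, G.dist u x ≤ n → G.dist u y ≤ n → f x = f y → x = y := by
    intro x y hx hy hxy
    have heq := hdist x y hx hy
    rw [hxy, SimpleGraph.dist_self] at heq
    exact hc.dist_eq_zero_iff.mp heq.symm
  choose g hg1 hg2 using hsurj
  refine ⟨fun z => if h : G.dist v z ≤ n then g z h else u, ?_, ?_, ?_, ?_⟩
  · have hvv : G.dist v v ≤ n := by simp [SimpleGraph.dist_self]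
    simp only [dif_pos hvv]
    exact hinj _ _ (hg1 _ _) h0 (by rw [hg2 v hvv, hfu])
  · intro z z' hz hz'
    simp only [dif_pos hz, dif_pos hz']
    have heq := hdist _ _ (hg1 z hz) (hg1 z' hz')
    rw [hg2 z hz, hg2 z' hz'] at heq
    exact heq.symm
  · intro z hz
    simp only [dif_pos hz]
    have heq := hcol _ (hg1 z hz)
    rw [hg2 z hz] at heq
    exact heq.symm
  · intro x hx
    have hz : G.dist v (f x) ≤ n := by
      have heq := hdist u x h0 hx
      rw [hfu] at heq
      exact heq ▸ hx
    refine ⟨f x, hz, ?_⟩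
    simp only [dif_pos hz]
    exact hinj _ _ (hg1 _ _) hx (hg2 (f x) hz)

lemma be_trans {n : ℕ} {u v w : V}
    (h1 : BallEquiv G φ n u v) (h2 : BallEquiv G φ n v w) : BallEquiv G φ n u w := by
  obtain ⟨f, hfu, hdf, hcf, hsf⟩ := h1
  obtain ⟨g, hgv, hdg, hcg, hsg⟩ := h2
  have h0 : G.dist u u ≤ n := by simp [SimpleGraph.dist_self]
  have hball : ∀ x, G.dist u x ≤ n → G.dist v (f x) ≤ n := by
    intro x hx
    have heq := hdf u x h0 hx
    rw [hfu] at heq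
    exact heq ▸ hx
  refine ⟨g ∘ f, by simp [hfu, hgv], ?_, ?_, ?_⟩
  · intro x y hx hy
    show G.dist (g (f x)) (g (f y)) = _
    rw [hdg _ _ (hball x hx) (hball y hy), hdf x y hx hy]
  · intro x hx
    show φ (g (f x)) = _
    rw [hcg _ (hball x hx), hcf x hx]
  · intro z hz
    obtain ⟨y, hy, hgy⟩ := hsg z hz
    obtain ⟨x, hx, hfx⟩ := hsf y hy
    exact ⟨x, hx, by simp [hfx, hgy]⟩

lemma be_transport (hc : G.Connected) {n s : ℕ} {u v : V}
    (h : BallEquiv G φ (n + s) u v) {p : V} (hp : G.dist u p ≤ s) :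
    ∃ q, G.dist v q = G.dist u p ∧ BallEquiv G φ n p q := by
  obtain ⟨f, hfu, hdist, hcol, hsurj⟩ := h
  have h0 : G.dist u u ≤ n + s := by simp [SimpleGraph.dist_self]
  have hps : G.dist u p ≤ n + s := by omega
  have hq : G.dist v (f p) = G.dist u p := by
    have heq := hdist u p h0 hps
    rwa [hfu] at heq
  have hball : ∀ x, G.dist p x ≤ n → G.dist u x ≤ n + s := by
    intro x hx
    have htri := hc.dist_triangle (u := u) (v := p) (w := x)
    omega
  refine ⟨f p, hq, f, rfl, ?_, ?_, ?_⟩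
  · intro x y hx hy
    exact hdist x y (hball x hx) (hball y hy)
  · intro x hx
    exact hcol x (hball x hx)
  · intro z hz
    have hvz : G.dist v z ≤ n + s := by
      have htri := hc.dist_triangle (u := v) (v := f p) (w := z)
      omega
    obtain ⟨x, hx, hfx⟩ := hsurj z hvz
    have heq := hdist p x hps hx
    rw [hfx] at heq
    exact ⟨x, heq ▸ hz, hfx⟩

lemma be_equiv (hc : G.Connected) (φ : V → A) (n : ℕ) :
    Equivalence (BallEquiv G φ n) :=
  ⟨be_refl G φ n, be_symm hc, be_trans⟩

lemma mk_eq_iff (hc : G.Connected) {n : ℕ} {x y : V} :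
    Quot.mk (BallEquiv G φ n) x = Quot.mk (BallEquiv G φ n) y ↔ BallEquiv G φ n x y := by
  rw [Quot.eq]
  exact Equivalence.eqvGen_iff (be_equiv hc φ n)

lemma nonspecial_step {n : ℕ} {u v : V} (h : ¬ IsSpecialCenter G φ n u)
    (huv : BallEquiv G φ n u v) : BallEquiv G φ (n+1) u v := by
  by_contra hcon; exact h ⟨v, huv, hcon⟩

lemma special_of_be (hc : G.Connected) {k : ℕ} {u u' : V} (h : BallEquiv G φ k u u')
    (hs : IsSpecialCenter G φ k u) : IsSpecialCenter G φ k u' := by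
  by_contra hns
  obtain ⟨z, hz, hz'⟩ := hs
  have h1 : BallEquiv G φ k u' z := be_trans (be_symm hc h) hz
  have h2 : BallEquiv G φ (k+1) u' z := nonspecial_step hns h1
  have h3 : BallEquiv G φ (k+1) u' u := nonspecial_step hns (be_symm hc h)
  exact hz' (be_trans (be_symm hc h3) h2)

lemma be_climb {a : ℕ} {u w : V} (h : BallEquiv G φ a u w) :
    ∀ i, (∀ k, a ≤ k → k < a + i → ¬ IsSpecialCenter G φ k u) →
      BallEquiv G φ (a + i) u w
  | 0, _ => h
  | (i+1), hns => by
      have hprev := be_climb h i (fun k h1 h2 => hns k h1 (by omega))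
      exact nonspecial_step (hns (a+i) (by omega) (by omega)) hprev

lemma ball_finite (hc : G.Connected) [G.LocallyFinite] (u : V) :
    ∀ r : ℕ, {y : V | G.dist u y ≤ r}.Finite
  | 0 => by
      refine (Set.finite_singleton u).subset ?_
      intro y hy
      simp only [Set.mem_setOf_eq, Nat.le_zero] at hy
      simp [(hc.dist_eq_zero_iff.mp hy).symm]
  | (r+1) => by
      have hfin := ball_finite hc u r
      refine (hfin.union (hfin.biUnion (fun v _ => (G.neighborSet v).toFinite))).subset ?_
      intro y hy
      simp only [Set.mem_setOf_eq] at hy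
      by_cases h : G.dist u y ≤ r
      · exact Or.inl h
      · right
        have hd : G.dist u y = r + 1 := by omega
        have hne : y ≠ u := by
          intro hyu
          rw [hyu, SimpleGraph.dist_self] at hd
          omega
        obtain ⟨p, hp⟩ := hc.exists_walk_length_eq_dist u y
        obtain ⟨w, hadj, p', hcons⟩ := SimpleGraph.Walk.exists_eq_cons_of_ne hne p.reverse
        have hlen : p'.length = r := by
          have h1 : p.reverse.length = r + 1 := by
            rw [SimpleGraph.Walk.length_reverse, hp, hd]
          rw [hcons, SimpleGraph.Walk.length_cons] at h1
          omega
        have hw : G.dist u w ≤ r := by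
          have := SimpleGraph.dist_le p'.reverse
          rwa [SimpleGraph.Walk.length_reverse, hlen] at this
        exact Set.mem_biUnion hw hadj.symm

end Lemmas

section Lemmas2

variable {G : SimpleGraph V} {φ : V → A}

lemma unique_special (hc : G.Connected) {N₀ c : ℕ}
    (hQS : ∀ n, N₀ ≤ n → complexity G φ n = n + c) {k : ℕ} (hk : N₀ ≤ k) (hk1 : 1 ≤ k + c)
    {a b : V} (ha : IsSpecialCenter G φ k a) (hb : IsSpecialCenter G φ k b) :
    BallEquiv G φ k a b := by
  by_contra hab
  obtain ⟨a₂, ha2, ha2'⟩ := ha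
  obtain ⟨b₂, hb2, hb2'⟩ := hb
  have e1 : Nat.card (Quot (BallEquiv G φ k)) = k + c := hQS k hk
  have e2 : Nat.card (Quot (BallEquiv G φ (k+1))) = k + 1 + c := hQS (k+1) (by omega)
  haveI hfk : Finite (Quot (BallEquiv G φ k)) := (Nat.card_pos_iff.mp (by omega)).2
  haveI hfk1 : Finite (Quot (BallEquiv G φ (k+1))) := (Nat.card_pos_iff.mp (by omega)).2
  let π : Quot (BallEquiv G φ (k+1)) → Quot (BallEquiv G φ k) :=
    Quot.map id (fun x y h => be_mono (Nat.le_succ k) h)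
  have hπ : ∀ x : V, π (Quot.mk _ x) = Quot.mk _ x := fun x => rfl
  let sec : Quot (BallEquiv G φ k) → Quot (BallEquiv G φ (k+1)) :=
    fun q => Quot.mk _ q.out
  have hπsec : ∀ q, π (sec q) = q := fun q => by
    show π (Quot.mk _ q.out) = q
    rw [hπ, Quot.out_eq]
  have choose2 : ∀ (x x₂ : V), BallEquiv G φ k x x₂ → ¬ BallEquiv G φ (k+1) x x₂ →
      ∃ x', BallEquiv G φ k x x' ∧
        Quot.mk (BallEquiv G φ (k+1)) x' ≠ sec (Quot.mk (BallEquiv G φ k) x) := by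
    intro x x₂ h2 h2'
    by_cases h : Quot.mk (BallEquiv G φ (k+1)) x = sec (Quot.mk (BallEquiv G φ k) x)
    · refine ⟨x₂, h2, fun hcon => ?_⟩
      rw [← h] at hcon
      exact h2' ((mk_eq_iff hc).mp hcon.symm)
    · exact ⟨x, be_refl G φ k x, h⟩
  obtain ⟨a', haa', hane⟩ := choose2 a a₂ ha2 ha2'
  obtain ⟨b', hbb', hbne⟩ := choose2 b b₂ hb2 hb2'
  let F : (Quot (BallEquiv G φ k)) ⊕ Bool → Quot (BallEquiv G φ (k+1)) :=
    Sum.elim sec (fun i => if i then Quot.mk _ a' else Quot.mk _ b')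
  have hmtop : ∀ (x : V) (q), sec q = Quot.mk (BallEquiv G φ (k+1)) x →
      q = Quot.mk (BallEquiv G φ k) x := by
    intro x q h
    have := congrArg π h
    rw [hπsec, hπ] at this
    exact this
  have hFinj : Function.Injective F := by
    rintro (q1 | i1) (q2 | i2) hF
    · simp only [F, Sum.elim_inl] at hF
      rw [← hπsec q1, ← hπsec q2, hF]
    · exfalso
      simp only [F, Sum.elim_inl, Sum.elim_inr] at hF
      cases i2 <;> simp at hF
      · have h1 := hmtop b' q1 hF
        rw [h1] at hF
        have : Quot.mk (BallEquiv G φ k) b' = Quot.mk (BallEquiv G φ k) b :=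
          (mk_eq_iff hc).mpr (be_symm hc hbb')
        rw [this] at hF
        exact hbne hF.symm
      · have h1 := hmtop a' q1 hF
        rw [h1] at hF
        have : Quot.mk (BallEquiv G φ k) a' = Quot.mk (BallEquiv G φ k) a :=
          (mk_eq_iff hc).mpr (be_symm hc haa')
        rw [this] at hF
        exact hane hF.symm
    · exfalso
      simp only [F, Sum.elim_inl, Sum.elim_inr] at hF
      cases i1 <;> simp at hF
      · have h1 := hmtop b' q2 hF.symm
        rw [h1] at hF
        have : Quot.mk (BallEquiv G φ k) b' = Quot.mk (BallEquiv G φ k) b :=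
          (mk_eq_iff hc).mpr (be_symm hc hbb')
        rw [this] at hF
        exact hbne hF
      · have h1 := hmtop a' q2 hF.symm
        rw [h1] at hF
        have : Quot.mk (BallEquiv G φ k) a' = Quot.mk (BallEquiv G φ k) a :=
          (mk_eq_iff hc).mpr (be_symm hc haa')
        rw [this] at hF
        exact hane hF
    · simp only [F, Sum.elim_inr] at hF
      cases i1 <;> cases i2 <;> simp at hF ⊢
      · exfalso
        have hba : BallEquiv G φ (k+1) b' a' := (mk_eq_iff hc).mp hF
        have : BallEquiv G φ k a b :=
          be_trans haa' (be_trans (be_symm hc (be_mono (Nat.le_succ k) hba))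
            (be_symm hc hbb'))
        exact hab this
      · exfalso
        have hba : BallEquiv G φ (k+1) a' b' := (mk_eq_iff hc).mp hF
        have : BallEquiv G φ k a b :=
          be_trans haa' (be_trans (be_mono (Nat.le_succ k) hba) (be_symm hc hbb'))
        exact hab this
  have hcard := Nat.card_le_card_of_injective F hFinj
  rw [Nat.card_sum] at hcard
  have hbool : Nat.card Bool = 2 := by simp [Nat.card_eq_fintype_card]
  omega

lemma freach (hc : G.Connected) (φ : V → A) (n : ℕ) (x y : V) :
    (FactorGraph G φ n).Reachable (Quot.mk _ x) (Quot.mk _ y) := by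
  classical
  obtain ⟨p⟩ := hc x y
  induction p with
  | nil => exact SimpleGraph.Reachable.refl _
  | @cons x b y h p ih =>
      by_cases hmk : Quot.mk (BallEquiv G φ n) x = Quot.mk (BallEquiv G φ n) b
      · rwa [hmk]
      · have hadj : (FactorGraph G φ n).Adj (Quot.mk _ x) (Quot.mk _ b) :=
          ⟨hmk, x, b, h, rfl, rfl⟩
        exact hadj.reachable.trans ih

lemma walk_lift_aux (hc : G.Connected) {M : ℕ} {t : Quot (BallEquiv G φ M)}
    (hyp : ∀ z : V, IsSpecialCenter G φ M z → Quot.mk (BallEquiv G φ M) z = t)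
    {a b : Quot (BallEquiv G φ M)} (W : (FactorGraph G φ M).Walk a b) :
    ∀ x : V, Quot.mk (BallEquiv G φ M) x = a →
      ∃ w, G.dist x w ≤ W.length ∧
        (Quot.mk (BallEquiv G φ M) w = b ∨ Quot.mk (BallEquiv G φ M) w = t) := by
  induction W with
  | nil => exact fun x hx => ⟨x, by simp [SimpleGraph.dist_self], Or.inl hx⟩
  | @cons a a' b h q ih =>
      intro x hx
      by_cases hxt : Quot.mk (BallEquiv G φ M) x = t
      · exact ⟨x, by simp [SimpleGraph.dist_self], Or.inr hxt⟩
      · obtain ⟨hne, u, v, huv, hu, hv⟩ := h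
        have hxu : BallEquiv G φ M x u := (mk_eq_iff hc).mp (hx.trans hu.symm)
        have hxns : ¬ IsSpecialCenter G φ M x := fun hs => hxt (hyp x hs)
        have hx1 : BallEquiv G φ (M+1) u x := be_symm hc (nonspecial_step hxns hxu)
        have hduv : G.dist u v ≤ 1 := by
          simpa using SimpleGraph.dist_le huv.toWalk
        obtain ⟨w, hdw, hvw⟩ := be_transport hc hx1 hduv
        have hwa' : Quot.mk (BallEquiv G φ M) w = a' := by
          rw [← hv]; exact (mk_eq_iff hc).mpr (be_symm hc hvw)
        obtain ⟨w', hw'1, hw'2⟩ := ih w hwa'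
        refine ⟨w', ?_, hw'2⟩
        have htri := hc.dist_triangle (u := x) (v := w) (w := w')
        change G.dist x w' ≤ q.length + 1
        omega

lemma walk_lift (hc : G.Connected) {M : ℕ} {t : Quot (BallEquiv G φ M)}
    (hyp : ∀ z : V, IsSpecialCenter G φ M z → Quot.mk (BallEquiv G φ M) z = t)
    {a : Quot (BallEquiv G φ M)} (W : (FactorGraph G φ M).Walk a t)
    (x : V) (hx : Quot.mk (BallEquiv G φ M) x = a) :
    ∃ w, G.dist x w ≤ W.length ∧ Quot.mk (BallEquiv G φ M) w = t := by
  obtain ⟨w, h1, h2⟩ := walk_lift_aux hc hyp W x hx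
  exact ⟨w, h1, h2.elim id id⟩

lemma bdd_of_finite {ι : Type*} [Finite ι] (f : ι → ℕ) : ∃ B, ∀ i, f i ≤ B := by
  obtain ⟨B, hB⟩ := (Set.finite_range f).bddAbove
  exact ⟨B, fun i => hB (Set.mem_range_self i)⟩

end Lemmas2

/-- A quasi-Sturmian coloring is of unbounded type iff it is uniformly recurrent: for
every `n` there is `m` such that every class of colored `n`-balls occurs within the
`m`-ball around every vertex. -/
theorem unbounded_type_iff_uniformly_recurrent {V A : Type*} (G : SimpleGraph V)
    [G.LocallyFinite] (φ : V → A) [Finite A] (d : ℕ) (hd : 2 ≤ d)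
    (htree : G.IsTree) (hreg : ∀ v : V, G.degree v = d)
    (hsurj : Function.Surjective φ)
    (N₀ c : ℕ) (hQS : ∀ n, N₀ ≤ n → complexity G φ n = n + c) :
    (∀ u : V, (typeSet G φ u).Infinite) ↔
      (∀ n : ℕ, ∃ m : ℕ, ∀ x e : V, ∃ w : V,
        G.dist x w + n ≤ m ∧ BallEquiv G φ n e w) := by
  classical
  have hc : G.Connected := htree.isConnected
  have qfin : ∀ k : ℕ, N₀ ≤ k → 1 ≤ k → Finite (Quot (BallEquiv G φ k)) := by
    intro k h1 h2
    have h3 : Nat.card (Quot (BallEquiv G φ k)) = k + c := hQS k h1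
    exact (Nat.card_pos_iff.mp (by omega)).2
  constructor
  · -- unbounded type implies uniformly recurrent
    intro hU n
    set n' := max n (max N₀ 1) with hn'
    have hn0 : N₀ ≤ n' := le_max_of_le_right (le_max_left _ _)
    have hn1 : 1 ≤ n' := le_max_of_le_right (le_max_right _ _)
    have hnn : n ≤ n' := le_max_left _ _
    haveI : Finite (Quot (BallEquiv G φ n')) := qfin n' hn0 hn1
    have key : ∀ q : Quot (BallEquiv G φ n'), ∃ L : ℕ, ∀ x : V, ∃ w : V,
        G.dist x w ≤ L ∧ BallEquiv G φ n' (Quot.out q) w := by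
      intro q
      set e₀ := Quot.out q with he₀
      have hex : ∃ k, n' ≤ k ∧ IsSpecialCenter G φ k e₀ := by
        obtain ⟨k, hk1, hk2⟩ := (hU e₀).exists_gt n'
        exact ⟨k, hk2.le, hk1⟩
      set M := Nat.find hex with hM
      obtain ⟨hM1, hM2⟩ : n' ≤ M ∧ IsSpecialCenter G φ M e₀ := Nat.find_spec hex
      have hMN₀ : N₀ ≤ M := hn0.trans hM1
      have hM1c : 1 ≤ M + c := by have := hn1.trans hM1; omega
      haveI : Finite (Quot (BallEquiv G φ M)) := qfin M hMN₀ (hn1.trans hM1)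
      set t : Quot (BallEquiv G φ M) := Quot.mk _ e₀ with ht
      have hyp : ∀ z : V, IsSpecialCenter G φ M z → Quot.mk (BallEquiv G φ M) z = t :=
        fun z hz => (mk_eq_iff hc).mpr (unique_special hc hQS hMN₀ hM1c hz hM2)
      have hwalks : ∀ a : Quot (BallEquiv G φ M), Nonempty ((FactorGraph G φ M).Walk a t) := by
        intro a
        have hr := freach hc φ M (Quot.out a) e₀
        rw [Quot.out_eq] at hr
        exact hr
      obtain ⟨L, hL⟩ := bdd_of_finite (fun a => (hwalks a).some.length)
      refine ⟨L, fun x => ?_⟩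
      obtain ⟨w, hw1, hw2⟩ :=
        walk_lift hc hyp ((hwalks (Quot.mk _ x)).some) x rfl
      refine ⟨w, hw1.trans (hL _), ?_⟩
      rw [ht] at hw2
      exact be_mono hM1 (be_symm hc ((mk_eq_iff hc).mp hw2))
    choose L hL using key
    obtain ⟨B, hB⟩ := bdd_of_finite L
    refine ⟨B + n', fun x e => ?_⟩
    obtain ⟨w, hw1, hw2⟩ := hL (Quot.mk (BallEquiv G φ n') e) x
    refine ⟨w, ?_, ?_⟩
    · have := hB (Quot.mk (BallEquiv G φ n') e); omega
    · have h1 : BallEquiv G φ n' e (Quot.out (Quot.mk (BallEquiv G φ n') e)) :=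
        (mk_eq_iff hc).mp (Quot.out_eq _).symm
      exact be_mono hnn (be_trans h1 hw2)
  · -- uniformly recurrent implies unbounded type
    intro hUR u
    by_contra hfin
    rw [Set.not_infinite] at hfin
    obtain ⟨N₁, hN₁⟩ : ∃ N₁ : ℕ, ∀ k, N₁ ≤ k → ¬ IsSpecialCenter G φ k u := by
      obtain ⟨Bd, hBd⟩ := hfin.bddAbove
      exact ⟨Bd + 1, fun k hk hs => by have := hBd hs; omega⟩
    obtain ⟨m, hm⟩ := hUR N₁
    set S := {y : V | G.dist u y ≤ m} with hS
    have hSfin : S.Finite := ball_finite hc u m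
    haveI := hSfin.to_subtype
    have hsurjS : ∀ k : ℕ,
        Function.Surjective (fun y : S => Quot.mk (BallEquiv G φ k) (y : V)) := by
      intro k b
      induction b using Quot.ind with
      | _ y =>
        obtain ⟨w, hw1, hw2⟩ := hm y u
        have hwu : BallEquiv G φ N₁ u w := hw2
        have hall : ∀ j, BallEquiv G φ j u w := by
          intro j
          rcases le_total j N₁ with h | h
          · exact be_mono h hwu
          · have h2 := be_climb hwu (j - N₁) (fun kk h1 _ => hN₁ kk h1)
            have heq : N₁ + (j - N₁) = j := by omega
            rwa [heq] at h2
        have hwy : G.dist w y ≤ m := by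
          rw [SimpleGraph.dist_comm]; omega
        obtain ⟨qv, hq1, hq2⟩ := be_transport hc (be_symm hc (hall (k + m))) hwy
        have hqS : qv ∈ S := by
          simp only [hS, Set.mem_setOf_eq]
          omega
        exact ⟨⟨qv, hqS⟩, (mk_eq_iff hc).mpr (be_symm hc hq2)⟩
    set β := Nat.card S with hβ
    set k := N₀ + β + 1 with hk
    have h1 : Nat.card (Quot (BallEquiv G φ k)) = k + c := hQS k (by omega)
    have h2 : Nat.card (Quot (BallEquiv G φ k)) ≤ β :=
      Nat.card_le_card_of_surjective _ (hsurjS k)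
    omega
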